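/- Fix all parameters except F, and assume β > h·(γ+δ). The coexistence pest equilibrium value y*(F) = β·r·(−(γ+δ) + (K₀+F)·(β − h·(γ+δ)))/(α·(K₀+F)·(β − h·(γ+δ))²) is a strictly increasing function of F on the region where it is positive, i.e., increasing fertilizer strictly increases the equilibrium pest density. -/
import Mathlib

noncomputable def ystar (r K0 α β δ γ h F : ℝ) : ℝ :=
  β * r * (-(γ + δ) + (K0 + F) * (β - h * (γ + δ))) /
    (α * (K0 + F) * (β - h * (γ + δ)) ^ 2)

theorem pest_equilibrium_increasing_in_F
    (r K0 α β δ γ h : ℝ)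
    (hr : 0 < r) (hK0 : 0 < K0) (hα : 0 < α)
    (hβ : 0 < β) (hδ : 0 < δ) (hγ : 0 < γ) (hh : 0 < h)
    (hcond : β > h * (γ + δ)) :
    ∀ F₁ F₂ : ℝ, 0 < F₁ → 0 < F₂ →
      (K0 + F₁) * (β - h * (γ + δ)) > γ + δ →
      (K0 + F₂) * (β - h * (γ + δ)) > γ + δ →
      F₁ < F₂ →
      ystar r K0 α β δ γ h F₁ < ystar r K0 α β δ γ h F₂ := by
  intro F₁ F₂ hF₁ hF₂ h1 h2 hlt
  have hc : 0 < β - h * (γ + δ) := sub_pos.mpr hcond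
  have hd1 : 0 < α * (K0 + F₁) * (β - h * (γ + δ)) ^ 2 := by positivity
  have hd2 : 0 < α * (K0 + F₂) * (β - h * (γ + δ)) ^ 2 := by positivity
  unfold ystar
  rw [div_lt_div_iff₀ hd1 hd2]
  have hs : 0 < γ + δ := by linarith
  nlinarith [mul_pos hβ hr, mul_pos hα (mul_pos hc hc), sq_nonneg (β - h*(γ+δ)),
    mul_pos (mul_pos hβ hr) (mul_pos (mul_pos hα (mul_pos hc hc)) (mul_pos hs (sub_pos.mpr hlt)))]
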